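/- Every function f : Bool^n → Bool that is expressible as a composition tree in which each internal node applies a function from the set {constant false, constant true, identity, negation} ∘ projection-structure where each input variable is used linearly (exactly once in the whole expression), and each binary node applies one of the six functions f₁,…,f₆ of Table 2, is either constant, a projection, or a negated projection. -/
import Mathlib


/-- The six binary Boolean functions of Table 2: two constants, the two
projections, and their negations. -/
def IsTableTwo (g : Bool → Bool → Bool) : Prop :=
  g = (fun _ _ => false) ∨ g = (fun _ _ => true) ∨
  g = (fun _ b => b) ∨ g = (fun _ b => !b) ∨
  g = (fun a _ => a) ∨ g = (fun a _ => !a)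

/-- Linear composition trees over `n` variables (each variable used exactly
once), with unary nodes from {const false, const true, id, not} and binary
nodes from the six functions of Table 2. -/
inductive LinExpr : ℕ → Type
  | var : LinExpr 1
  | unary {n : ℕ} (u : Bool → Bool)
      (hu : u = (fun _ => false) ∨ u = (fun _ => true) ∨ u = id ∨ u = not)
      (e : LinExpr n) : LinExpr n
  | binary {m k : ℕ} (g : Bool → Bool → Bool) (hg : IsTableTwo g)
      (l : LinExpr m) (r : LinExpr k) : LinExpr (m + k)

/-- Evaluation of a linear composition tree. -/
def LinExpr.eval : {n : ℕ} → LinExpr n → (Fin n → Bool) → Bool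
  | _, .var, v => v 0
  | _, .unary u _ e, v => u (e.eval v)
  | _, .binary (m := m) (k := k) g _ l r, v =>
      g (l.eval fun i => v (Fin.castAdd k i)) (r.eval fun i => v (Fin.natAdd m i))

theorem stmt_8 {n : ℕ} (e : LinExpr n) :
    (∃ c : Bool, e.eval = fun _ => c) ∨
    (∃ i : Fin n, e.eval = fun v => v i) ∨
    (∃ i : Fin n, e.eval = fun v => !(v i)) := by
  induction e with
  | var => exact Or.inr (Or.inl ⟨0, rfl⟩)
  | unary u hu e ih =>
    rcases hu with rfl | rfl | rfl | rfl <;>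
      rcases ih with ⟨c, hc⟩ | ⟨i, hi⟩ | ⟨i, hi⟩ <;>
      simp only [LinExpr.eval, *] <;>
      first
        | exact Or.inl ⟨false, rfl⟩
        | exact Or.inl ⟨true, rfl⟩
        | exact Or.inl ⟨c, rfl⟩
        | exact Or.inl ⟨!c, rfl⟩
        | exact Or.inr (Or.inl ⟨i, rfl⟩)
        | exact Or.inr (Or.inr ⟨i, rfl⟩)
        | exact (Or.inr (Or.inl ⟨i, by funext v; simp⟩))
  | binary g hg l r ihl ihr =>
    rcases hg with rfl | rfl | rfl | rfl | rfl | rfl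
    · exact Or.inl ⟨false, rfl⟩
    · exact Or.inl ⟨true, rfl⟩
    · rcases ihr with ⟨c, hc⟩ | ⟨i, hi⟩ | ⟨i, hi⟩
      · exact Or.inl ⟨c, by funext v; simp [LinExpr.eval, hc]⟩
      · exact Or.inr (Or.inl ⟨Fin.natAdd _ i, by funext v; simp [LinExpr.eval, hi]⟩)
      · exact Or.inr (Or.inr ⟨Fin.natAdd _ i, by funext v; simp [LinExpr.eval, hi]⟩)
    · rcases ihr with ⟨c, hc⟩ | ⟨i, hi⟩ | ⟨i, hi⟩
      · exact Or.inl ⟨!c, by funext v; simp [LinExpr.eval, hc]⟩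
      · exact Or.inr (Or.inr ⟨Fin.natAdd _ i, by funext v; simp [LinExpr.eval, hi]⟩)
      · exact Or.inr (Or.inl ⟨Fin.natAdd _ i, by funext v; simp [LinExpr.eval, hi]⟩)
    · rcases ihl with ⟨c, hc⟩ | ⟨i, hi⟩ | ⟨i, hi⟩
      · exact Or.inl ⟨c, by funext v; simp [LinExpr.eval, hc]⟩
      · exact Or.inr (Or.inl ⟨Fin.castAdd _ i, by funext v; simp [LinExpr.eval, hi]⟩)
      · exact Or.inr (Or.inr ⟨Fin.castAdd _ i, by funext v; simp [LinExpr.eval, hi]⟩)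
    · rcases ihl with ⟨c, hc⟩ | ⟨i, hi⟩ | ⟨i, hi⟩
      · exact Or.inl ⟨!c, by funext v; simp [LinExpr.eval, hc]⟩
      · exact Or.inr (Or.inr ⟨Fin.castAdd _ i, by funext v; simp [LinExpr.eval, hi]⟩)
      · exact Or.inr (Or.inl ⟨Fin.castAdd _ i, by funext v; simp [LinExpr.eval, hi]⟩)
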